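/- Let $B \in \mathbb{R}^{M \times N}$ be a matrix with $B_{i,j} \neq 0$ for some indices $i, j$. Then the matrix $C = B - \frac{1}{B_{i,j}} B_{:,j}\, B_{i,:}$ (where $B_{:,j}$ is the $j$-th column and $B_{i,:}$ the $i$-th row) satisfies $\mathrm{rank}(C) = \mathrm{rank}(B) - 1$. -/

import Mathlib

open Matrix


/-- Wedderburn rank-one reduction: if `B i j ≠ 0`, then
`C = B - B_{:,j} B_{i,:} / B_{i,j}` satisfies `rank C = rank B - 1`
(stated as `rank C + 1 = rank B`, the exact content since `rank B ≥ 1`). -/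
theorem wedderburn_rank_one_reduction {M N : ℕ}
    (B : Matrix (Fin M) (Fin N) ℝ) (i : Fin M) (j : Fin N)
    (hij : B i j ≠ 0)
    (C : Matrix (Fin M) (Fin N) ℝ)
    (hC : ∀ a b, C a b = B a b - B a j * B i b / B i j) :
    C.rank + 1 = B.rank := by
  classical
  set v : Fin M → ℝ := fun a => B a j with hv
  set S : Submodule ℝ (Fin M → ℝ) := Submodule.span ℝ (Set.range Cᵀ) with hS
  -- every element of S has i-th coordinate zero
  have hSi : ∀ x ∈ S, x i = 0 := by
    intro x hx
    have : S ≤ LinearMap.ker (LinearMap.proj (R := ℝ) (φ := fun _ : Fin M => ℝ) i) := by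
      rw [hS, Submodule.span_le]
      rintro _ ⟨b, rfl⟩
      simp only [SetLike.mem_coe, LinearMap.mem_ker, LinearMap.proj_apply]
      show C i b = 0
      rw [hC]
      field_simp
      ring
    simpa using this hx
  have hvS : v ∉ S := fun h => hij (hSi v h)
  have hv0 : v ≠ 0 := fun h => hij (congrFun h i)
  -- the columns of B and the columns of C differ by multiples of v
  have hcol : ∀ b, Bᵀ b = Cᵀ b + (B i b / B i j) • v := by
    intro b
    funext a
    simp only [Matrix.transpose_apply, Pi.add_apply, Pi.smul_apply, smul_eq_mul, hC]
    ring
  have hspan : Submodule.span ℝ (Set.range Bᵀ) = S ⊔ (ℝ ∙ v) := by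
    apply le_antisymm
    · rw [Submodule.span_le]
      rintro _ ⟨b, rfl⟩
      rw [hcol b]
      exact Submodule.add_mem _
        (Submodule.mem_sup_left (Submodule.subset_span ⟨b, rfl⟩))
        (Submodule.mem_sup_right (Submodule.smul_mem _ _ (Submodule.mem_span_singleton_self v)))
    · apply sup_le
      · rw [hS, Submodule.span_le]
        rintro _ ⟨b, rfl⟩
        have : Cᵀ b = Bᵀ b - (B i b / B i j) • Bᵀ j := by
          funext a
          simp only [Matrix.transpose_apply, Pi.sub_apply, Pi.smul_apply, smul_eq_mul, hC]
          ring
        rw [this]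
        exact Submodule.sub_mem _
          (Submodule.subset_span ⟨b, rfl⟩)
          (Submodule.smul_mem _ _ (Submodule.subset_span ⟨j, rfl⟩))
      · rw [Submodule.span_singleton_le_iff_mem]
        exact Submodule.subset_span ⟨j, rfl⟩
  have hdisj : Disjoint S (ℝ ∙ v) :=
    (Submodule.disjoint_span_singleton' hv0).mpr hvS
  have hinf : S ⊓ (ℝ ∙ v) = ⊥ := hdisj.eq_bot
  have key := Submodule.finrank_sup_add_finrank_inf_eq S (ℝ ∙ v)
  rw [hinf, finrank_bot, add_zero, finrank_span_singleton hv0] at key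
  rw [Matrix.rank_eq_finrank_span_cols, Matrix.rank_eq_finrank_span_cols]
  change Module.finrank ℝ (Submodule.span ℝ (Set.range Cᵀ)) + 1 = Module.finrank ℝ (Submodule.span ℝ (Set.range Bᵀ))
  rw [hspan, key]
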